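/- Let α₁, …, α_N ∈ V* (N ≥ 1) and c₁, …, c_N > 0, and define F : V → ℝ by F(x) = Σᵢ cᵢ · e^{αᵢ(x)}. Then F is stable if and only if 0 is contained in the interior of the convex hull of {α₁, …, α_N} in V*. (Proposition 3.) -/

import Mathlib

/-- A function `F` on a normed space is *stable* if `F x → +∞` as `‖x‖ → ∞`. -/
def Stable {V : Type*} [NormedAddCommGroup V] (F : V → ℝ) : Prop :=
  Filter.Tendsto F (Bornology.cobounded V) Filter.atTop

open Filter Bornology Metric

section Aux

variable {V : Type*} [NormedAddCommGroup V] [InnerProductSpace ℝ V] [FiniteDimensional ℝ V]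

/-- In a finite-dimensional real inner product space, every continuous linear functional on the
dual is evaluation at a point. -/
lemma dual_dual_eval (f : (V →L[ℝ] ℝ) →L[ℝ] ℝ) : ∃ w : V, ∀ ψ : V →L[ℝ] ℝ, f ψ = ψ w := by
  have hsmul : ∀ (r : ℝ) (v : V), InnerProductSpace.toDual ℝ V (r • v) =
      r • InnerProductSpace.toDual ℝ V v := fun r v => by
    rw [LinearIsometryEquiv.map_smulₛₗ]
    simp [starRingEnd_apply]
  let g : V →ₗ[ℝ] ℝ :=
    { toFun := fun v => f (InnerProductSpace.toDual ℝ V v)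
      map_add' := fun a b => by simp
      map_smul' := fun r v => by simp [hsmul r v] }
  obtain ⟨w, hw⟩ := (InnerProductSpace.toDual ℝ V).surjective (LinearMap.toContinuousLinearMap g)
  have hwv : ∀ v : V, f (InnerProductSpace.toDual ℝ V v) = (inner ℝ w v : ℝ) := by
    intro v
    have h : InnerProductSpace.toDual ℝ V w v = (LinearMap.toContinuousLinearMap g) v := by
      rw [hw]
    rw [InnerProductSpace.toDual_apply_apply] at h
    exact h.symm
  refine ⟨w, fun ψ => ?_⟩
  have hψ : InnerProductSpace.toDual ℝ V ((InnerProductSpace.toDual ℝ V).symm ψ) = ψ :=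
    (InnerProductSpace.toDual ℝ V).apply_symm_apply ψ
  have h1 := hwv ((InnerProductSpace.toDual ℝ V).symm ψ)
  rw [hψ] at h1
  have h2 : ψ w = (inner ℝ ((InnerProductSpace.toDual ℝ V).symm ψ) w : ℝ) := by
    conv_lhs => rw [← hψ]
    rw [InnerProductSpace.toDual_apply_apply]
  rw [h1, h2, real_inner_comm]

/-- If every nonzero vector is strictly positive on some `α i`, then `0` is in the interior of the
convex hull of the `α i`. -/
lemma mem_interior_hull [Nontrivial V] {N : ℕ} (hN : 1 ≤ N) (α : Fin N → V →L[ℝ] ℝ)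
    (h : ∀ x : V, x ≠ 0 → ∃ i, 0 < α i x) :
    (0 : V →L[ℝ] ℝ) ∈ interior (convexHull ℝ (Set.range α)) := by
  have hne : (Finset.univ : Finset (Fin N)).Nonempty := ⟨⟨0, hN⟩, Finset.mem_univ _⟩
  set K := convexHull ℝ (Set.range α) with hK
  set g : V → ℝ := fun x => Finset.univ.sup' hne fun i => α i x with hg
  have gcont : Continuous g := Continuous.finset_sup'_apply hne fun i _ => (α i).continuous
  obtain ⟨x₀, hx₀, hmin⟩ := (isCompact_sphere (0 : V) 1).exists_isMinOn
    (NormedSpace.sphere_nonempty.mpr zero_le_one) gcont.continuousOn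
  have hx₀0 : x₀ ≠ 0 := by
    intro h0
    rw [mem_sphere_zero_iff_norm, h0, norm_zero] at hx₀
    norm_num at hx₀
  obtain ⟨i₀, hi₀⟩ := h x₀ hx₀0
  have hm : 0 < g x₀ := lt_of_lt_of_le hi₀ (Finset.le_sup' (fun i => α i x₀) (Finset.mem_univ i₀))
  set m := g x₀ with hmdef
  have hball : ball (0 : V →L[ℝ] ℝ) m ⊆ K := by
    intro φ hφ
    by_contra hφK
    have hKcl : IsClosed K := ((Set.finite_range α).isCompact_convexHull (𝕜 := ℝ)).isClosed
    obtain ⟨f, u, hfu, huf⟩ :=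
      geometric_hahn_banach_closed_point (convex_convexHull ℝ _) hKcl hφK
    obtain ⟨w, hw⟩ := dual_dual_eval f
    have hαw : ∀ i, α i w < u := fun i => by
      have := hfu (α i) (subset_convexHull ℝ _ (Set.mem_range_self i))
      rwa [hw] at this
    have hφw : u < φ w := by rwa [hw] at huf
    have hwne : w ≠ 0 := by
      intro h0
      subst h0
      have h1 := hαw ⟨0, hN⟩
      rw [map_zero] at h1
      rw [map_zero] at hφw
      linarith
    have hwpos : 0 < ‖w‖ := norm_pos_iff.mpr hwne
    have hxw : (‖w‖⁻¹ • w) ∈ sphere (0 : V) 1 := by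
      rw [mem_sphere_zero_iff_norm, norm_smul, norm_inv, norm_norm,
        inv_mul_cancel₀ hwpos.ne']
    have hmle : m ≤ g (‖w‖⁻¹ • w) := hmin hxw
    obtain ⟨i, -, hieq⟩ := Finset.exists_mem_eq_sup' hne fun i => α i (‖w‖⁻¹ • w)
    have h2 : m ≤ ‖w‖⁻¹ * α i w := by
      calc m ≤ g (‖w‖⁻¹ • w) := hmle
        _ = α i (‖w‖⁻¹ • w) := hieq
        _ = ‖w‖⁻¹ * α i w := by rw [map_smul, smul_eq_mul]
    have h3 : m * ‖w‖ ≤ α i w := by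
      have h4 := mul_le_mul_of_nonneg_right h2 hwpos.le
      have h5 : ‖w‖⁻¹ * α i w * ‖w‖ = α i w := by field_simp
      linarith
    have h5 : φ w ≤ ‖φ‖ * ‖w‖ := (le_abs_self _).trans (φ.le_opNorm w)
    have h6 : ‖φ‖ < m := by rwa [mem_ball_zero_iff] at hφ
    nlinarith [hαw i]
  exact interior_maximal hball isOpen_ball (mem_ball_self hm)

end Aux

/-- Proposition 3: `F(x) = Σᵢ cᵢ e^{αᵢ(x)}` (with all `cᵢ > 0`) is stable if and only if
`0` lies in the interior of the convex hull of the `αᵢ` in `V*`. -/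
theorem exp_sum_stable_iff {V : Type*} [NormedAddCommGroup V]
    [InnerProductSpace ℝ V] [FiniteDimensional ℝ V] {N : ℕ} (hN : 1 ≤ N)
    (α : Fin N → V →L[ℝ] ℝ) (c : Fin N → ℝ) (hc : ∀ i, 0 < c i) :
    Stable (fun x : V => ∑ i, c i * Real.exp (α i x)) ↔
      (0 : V →L[ℝ] ℝ) ∈ interior (convexHull ℝ (Set.range α)) := by
  have hne : (Finset.univ : Finset (Fin N)).Nonempty := ⟨⟨0, hN⟩, Finset.mem_univ _⟩
  rcases subsingleton_or_nontrivial V with hV | hV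
  · -- Trivial space: both sides hold.
    apply iff_of_true
    · haveI : Finite V := Finite.of_subsingleton
      unfold Stable
      rw [Bornology.cobounded_eq_bot]
      exact tendsto_bot
    · have hdual : ∀ φ : V →L[ℝ] ℝ, φ = 0 := fun φ => by
        ext x
        rw [Subsingleton.elim x (0 : V), map_zero]
        rfl
      have h0 : (0 : V →L[ℝ] ℝ) ∈ convexHull ℝ (Set.range α) := by
        have := subset_convexHull ℝ (Set.range α) (Set.mem_range_self ⟨0, hN⟩)
        rwa [hdual (α ⟨0, hN⟩)] at this
      have huniv : convexHull ℝ (Set.range α) = Set.univ :=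
        Set.eq_univ_of_forall fun ψ => by rw [hdual ψ]; exact h0
      rw [huniv, interior_univ]
      trivial
  · constructor
    · -- Stable → 0 ∈ interior hull
      intro hS
      apply mem_interior_hull hN α
      intro x hx
      by_contra hcon
      push_neg at hcon
      have hray : Tendsto (fun t : ℝ => t • x) atTop (cobounded V) := by
        rw [← tendsto_norm_atTop_iff_cobounded]
        have heq : (fun t : ℝ => ‖t • x‖) = fun t : ℝ => |t| * ‖x‖ := by
          funext t; rw [norm_smul, Real.norm_eq_abs]
        rw [heq]
        exact tendsto_abs_atTop_atTop.atTop_mul_const (norm_pos_iff.mpr hx)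
      have hF := hS.comp hray
      obtain ⟨t, ht1, ht2⟩ :=
        ((hF.eventually_ge_atTop ((∑ i, c i) + 1)).and (eventually_ge_atTop (0 : ℝ))).exists
      have hle : ∑ i, c i * Real.exp (α i (t • x)) ≤ ∑ i, c i := by
        apply Finset.sum_le_sum
        intro i _
        have hαle : α i (t • x) ≤ 0 := by
          rw [map_smul, smul_eq_mul]
          exact mul_nonpos_of_nonneg_of_nonpos ht2 (hcon i)
        calc c i * Real.exp (α i (t • x)) ≤ c i * 1 :=
              mul_le_mul_of_nonneg_left (Real.exp_le_one_iff.mpr hαle) (hc i).le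
          _ = c i := mul_one _
      have ht1' : (∑ i, c i) + 1 ≤ ∑ i, c i * Real.exp (α i (t • x)) := ht1
      linarith
    · -- 0 ∈ interior hull → Stable
      intro h0
      rw [mem_interior_iff_mem_nhds] at h0
      obtain ⟨ε, hε, hball⟩ := Metric.mem_nhds_iff.mp h0
      have key : ∀ x : V, ∃ i, ε / 2 * ‖x‖ ≤ α i x := by
        intro x
        rcases eq_or_ne x 0 with rfl | hx
        · exact ⟨⟨0, hN⟩, by simp⟩
        · have hxn : 0 < ‖x‖ := norm_pos_iff.mpr hx
          set φ := InnerProductSpace.toDual ℝ V ((ε / (2 * ‖x‖)) • x) with hφdef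
          have hφnorm : ‖φ‖ = ε / 2 := by
            rw [hφdef, LinearIsometryEquiv.norm_map, norm_smul, Real.norm_eq_abs,
              abs_of_pos (by positivity)]
            field_simp
          have hφK : φ ∈ convexHull ℝ (Set.range α) := hball (by
            rw [mem_ball_zero_iff, hφnorm]; linarith)
          set M := Finset.univ.sup' hne fun i => α i x with hM
          have hlin : IsLinearMap ℝ (fun ψ : V →L[ℝ] ℝ => ψ x) :=
            ⟨fun a b => rfl, fun r a => rfl⟩
          have hhalf : convexHull ℝ (Set.range α) ⊆ {ψ : V →L[ℝ] ℝ | ψ x ≤ M} := by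
            apply convexHull_min
            · rintro ψ ⟨i, rfl⟩
              show (α i) x ≤ M
              exact Finset.le_sup' (fun j => α j x) (Finset.mem_univ i)
            · exact convex_halfSpace_le hlin M
          have hφx : φ x = ε / 2 * ‖x‖ := by
            rw [hφdef, InnerProductSpace.toDual_apply_apply, real_inner_smul_left,
              real_inner_self_eq_norm_mul_norm]
            field_simp
          obtain ⟨i, -, hieq⟩ := Finset.exists_mem_eq_sup' hne fun i => α i x
          refine ⟨i, ?_⟩
          have := hhalf hφK
          rw [Set.mem_setOf_eq, hφx, hM, hieq] at this
          exact this
      set c0 := Finset.univ.inf' hne c with hc0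
      have hc0pos : 0 < c0 := by
        rw [hc0, Finset.lt_inf'_iff]
        exact fun i _ => hc i
      have hbound : ∀ x : V,
          c0 * Real.exp (ε / 2 * ‖x‖) ≤ ∑ i, c i * Real.exp (α i x) := by
        intro x
        obtain ⟨i, hi⟩ := key x
        calc c0 * Real.exp (ε / 2 * ‖x‖) ≤ c i * Real.exp (α i x) :=
              mul_le_mul (Finset.inf'_le _ (Finset.mem_univ i)) (Real.exp_le_exp.mpr hi)
                (Real.exp_pos _).le (hc i).le
          _ ≤ ∑ j, c j * Real.exp (α j x) :=
              Finset.single_le_sum (f := fun j => c j * Real.exp (α j x)) (fun j _ => mul_nonneg (hc j).le (Real.exp_pos _).le)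
                (Finset.mem_univ i)
      have htend : Tendsto (fun x : V => c0 * Real.exp (ε / 2 * ‖x‖)) (cobounded V) atTop := by
        have h1 : Tendsto (fun t : ℝ => c0 * Real.exp (ε / 2 * t)) atTop atTop := by
          apply Tendsto.const_mul_atTop hc0pos
          exact Real.tendsto_exp_atTop.comp (tendsto_id.const_mul_atTop (by positivity))
        exact h1.comp tendsto_norm_cobounded_atTop
      exact tendsto_atTop_mono hbound htend
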